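/- Let q be a unit quaternion with rotation angle θ (q = cos(θ/2) − sin(θ/2)·u, u a unit imaginary quaternion, θ ∈ [0, 2π]), and let t = α₁ i + α₂ j + α₃ k be any vector with |α₁|, |α₂|, |α₃| ≤ a. Then ‖q t q⁻¹ − t‖ ≤ 3 a θ. -/

import Mathlib

open Quaternion

set_option maxHeartbeats 1000000 in
theorem rot_error_le_three_a_theta (q u t : ℍ[ℝ]) (θ a α₁ α₂ α₃ : ℝ)
    (hu_re : u.re = 0) (hu_norm : ‖u‖ = 1)
    (hθ : θ ∈ Set.Icc (0 : ℝ) (2 * Real.pi))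
    (hq : q = (Real.cos (θ / 2) : ℍ[ℝ]) - Real.sin (θ / 2) • u)
    (ht : t = α₁ • (⟨0, 1, 0, 0⟩ : ℍ[ℝ]) + α₂ • (⟨0, 0, 1, 0⟩ : ℍ[ℝ])
            + α₃ • (⟨0, 0, 0, 1⟩ : ℍ[ℝ]))
    (h₁ : |α₁| ≤ a) (h₂ : |α₂| ≤ a) (h₃ : |α₃| ≤ a) :
    ‖q * t * q⁻¹ - t‖ ≤ 3 * a * θ := by
  obtain ⟨hθ0, hθ2π⟩ := hθ
  set s := Real.sin (θ / 2) with hs_def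
  set c := Real.cos (θ / 2) with hc_def
  have ha : 0 ≤ a := le_trans (abs_nonneg _) h₁
  have hs0 : 0 ≤ s := by
    apply Real.sin_nonneg_of_nonneg_of_le_pi (by linarith)
    linarith [Real.pi_pos]
  have hsle : s ≤ θ / 2 := Real.sin_le (by linarith)
  -- norm of u squared
  have hu2 : normSq u = 1 := by
    rw [normSq_eq_norm_mul_self, hu_norm]; ring
  have hu2' : u.imI ^ 2 + u.imJ ^ 2 + u.imK ^ 2 = 1 := by
    rw [normSq_def'] at hu2; rw [hu_re] at hu2; nlinarith [hu2]
  -- q is a unit quaternion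
  have hq1 : ‖q‖ = 1 := by
    have hnq : normSq q = 1 := by
      rw [hq, normSq_def']
      simp [hu_re]
      nlinarith [Real.sin_sq_add_cos_sq (θ / 2)]
    have := normSq_eq_norm_mul_self q
    rw [hnq] at this
    nlinarith [norm_nonneg q]
  have hqne : q ≠ 0 := by
    intro h; rw [h, norm_zero] at hq1; norm_num at hq1
  -- key algebraic identity
  have key : q * t * q⁻¹ - t = (s • (t * u - u * t)) * q⁻¹ := by
    have h1 : q * t - t * q = s • (t * u - u * t) := by
      rw [hq]
      simp only [sub_mul, mul_sub, smul_mul_assoc, mul_smul_comm, smul_sub,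
        Quaternion.coe_commutes]
      abel
    rw [← h1, sub_mul, mul_assoc t, mul_inv_cancel₀ hqne, mul_one]
  -- bound on ‖t‖
  have ht_normSq : normSq t = α₁ ^ 2 + α₂ ^ 2 + α₃ ^ 2 := by
    rw [normSq_def', ht]
    simp
  have ht_norm : ‖t‖ ≤ 3 * a := by
    have h := normSq_eq_norm_mul_self t
    rw [ht_normSq] at h
    have e1 : α₁ ^ 2 ≤ a ^ 2 := sq_le_sq' (abs_le.mp h₁).1 (abs_le.mp h₁).2
    have e2 : α₂ ^ 2 ≤ a ^ 2 := sq_le_sq' (abs_le.mp h₂).1 (abs_le.mp h₂).2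
    have e3 : α₃ ^ 2 ≤ a ^ 2 := sq_le_sq' (abs_le.mp h₃).1 (abs_le.mp h₃).2
    nlinarith [norm_nonneg t, h, e1, e2, e3, ha]
  -- final bound
  rw [key, norm_mul, norm_inv, hq1, inv_one, mul_one, norm_smul,
    Real.norm_eq_abs, abs_of_nonneg hs0]
  have hcomm : ‖t * u - u * t‖ ≤ 2 * ‖t‖ := by
    calc ‖t * u - u * t‖ ≤ ‖t * u‖ + ‖u * t‖ := norm_sub_le _ _
      _ = 2 * ‖t‖ := by rw [norm_mul, norm_mul, hu_norm]; ring
  calc s * ‖t * u - u * t‖ ≤ (θ / 2) * (2 * (3 * a)) := by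
        apply mul_le_mul hsle (hcomm.trans (by linarith)) (norm_nonneg _) (by linarith)
      _ = 3 * a * θ := by ring
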